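/- Let D ≥ 1, let μ, φ ∈ ℝ^D, ŷ ∈ ℝ, let Λ be a symmetric positive definite D×D real matrix, set Λ₁ = Λ + φφᵀ and ξ = Λμ + φŷ. Then ŷ² + μᵀΛμ − ξᵀΛ₁⁻¹ξ ≥ 0. Consequently, in the Bayesian update β₁ = β₀ + (1/2)(ŷ² − μ₁ᵀΛ₁μ₁ + μ₀ᵀΛ₀μ₀) of the Normal-Gamma rate parameter, the rate parameter never decreases: β₁ ≥ β₀. -/

import Mathlib

open Real MeasureTheory Matrix

/-- Univariate Gaussian density `N(y; m, v)` with mean `m`, variance `v`. -/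
noncomputable def gauss1 (y m v : ℝ) : ℝ :=
  (2 * π * v) ^ (-(1 : ℝ) / 2) * Real.exp (-((y - m) ^ 2) / (2 * v))

/-- Multivariate Gaussian density in precision form: `N(θ; μ, P⁻¹)` with precision matrix `P`. -/
noncomputable def gaussND {ι : Type*} [Fintype ι] [DecidableEq ι]
    (θ μ : ι → ℝ) (P : Matrix ι ι ℝ) : ℝ :=
  (2 * π) ^ (-(Fintype.card ι : ℝ) / 2) * P.det ^ ((1 : ℝ) / 2) *
    Real.exp (-(1 / 2) * ((θ - μ) ⬝ᵥ (P *ᵥ (θ - μ))))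

/-- Gamma density `G(τ; α, β)` with shape `α` and rate `β`. -/
noncomputable def gammaPdf (τ α β : ℝ) : ℝ :=
  β ^ α / Real.Gamma α * τ ^ (α - 1) * Real.exp (-β * τ)

/-- Normal-Gamma density `NG(θ, τ; μ, Λ, α, β) = N(θ; μ, (τΛ)⁻¹) · G(τ; α, β)`. -/
noncomputable def normalGamma {ι : Type*} [Fintype ι] [DecidableEq ι]
    (θ : ι → ℝ) (τ : ℝ) (μ : ι → ℝ) (Λ : Matrix ι ι ℝ) (α β : ℝ) : ℝ :=
  gaussND θ μ (τ • Λ) * gammaPdf τ α β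

/-- Location-scale Student-t density `T(y; ν, m, s²)`. -/
noncomputable def studentT (y ν m s2 : ℝ) : ℝ :=
  Real.Gamma ((ν + 1) / 2) / (Real.sqrt (π * ν * s2) * Real.Gamma (ν / 2)) *
    (1 + (y - m) ^ 2 / (ν * s2)) ^ (-((ν + 1) / 2))

/-- Multivariate location-scale Student-t density `T_D(θ; ν, μ, Σ)`. -/
noncomputable def multiStudentT {ι : Type*} [Fintype ι] [DecidableEq ι]
    (θ : ι → ℝ) (ν : ℝ) (μ : ι → ℝ) (S : Matrix ι ι ℝ) : ℝ :=
  Real.Gamma ((ν + Fintype.card ι) / 2) /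
      (Real.Gamma (ν / 2) * (ν * π) ^ ((Fintype.card ι : ℝ) / 2) * S.det ^ ((1 : ℝ) / 2)) *
    (1 + (θ - μ) ⬝ᵥ (S⁻¹ *ᵥ (θ - μ)) / ν) ^ (-((ν + Fintype.card ι) / 2))

/-- The digamma function: the derivative of `ln ∘ Γ`. -/
noncomputable def digamma (x : ℝ) : ℝ := deriv (fun t => Real.log (Real.Gamma t)) x

/-- The Beta function `B(a, b) = Γ(a)Γ(b)/Γ(a+b)`. -/
noncomputable def betaFn (a b : ℝ) : ℝ := Real.Gamma a * Real.Gamma b / Real.Gamma (a + b)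


lemma aux_vecMulVec_mulVec {D : ℕ} (φ x : Fin D → ℝ) :
    vecMulVec φ φ *ᵥ x = (φ ⬝ᵥ x) • φ := by
  funext i
  simp [Matrix.mulVec, Matrix.vecMulVec_apply, dotProduct, Finset.mul_sum, mul_assoc,
    mul_comm, mul_left_comm]

lemma aux_vecMulVec_posSemidef {D : ℕ} (φ : Fin D → ℝ) : (vecMulVec φ φ).PosSemidef := by
  refine Matrix.PosSemidef.of_dotProduct_mulVec_nonneg ?_ ?_
  · ext i j
    simp [Matrix.conjTranspose_apply, Matrix.vecMulVec_apply, mul_comm]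
  · intro x
    rw [aux_vecMulVec_mulVec]
    simp only [star_trivial, dotProduct_smul, smul_eq_mul, dotProduct_comm x φ]
    exact mul_self_nonneg _


/-- the rate parameter of the Normal-Gamma distribution never decreases
in the Bayesian update. -/
theorem rate_parameter_nondecreasing (D : ℕ) (hD : 1 ≤ D) (μ₀ φ : Fin D → ℝ) (yhat : ℝ)
    (Λ₀ : Matrix (Fin D) (Fin D) ℝ) (hΛ₀ : Λ₀.PosDef) (β₀ : ℝ) (hβ₀ : 0 < β₀) :
    let Λ₁ : Matrix (Fin D) (Fin D) ℝ := vecMulVec φ φ + Λ₀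
    let μ₁ : Fin D → ℝ := Λ₁⁻¹ *ᵥ (yhat • φ + Λ₀ *ᵥ μ₀)
    let ξ : Fin D → ℝ := Λ₀ *ᵥ μ₀ + yhat • φ
    0 ≤ yhat ^ 2 + μ₀ ⬝ᵥ (Λ₀ *ᵥ μ₀) - ξ ⬝ᵥ (Λ₁⁻¹ *ᵥ ξ) ∧
      β₀ ≤ β₀ + (1 / 2) * (yhat ^ 2 - μ₁ ⬝ᵥ (Λ₁ *ᵥ μ₁) + μ₀ ⬝ᵥ (Λ₀ *ᵥ μ₀)) := by
  intro Λ₁ μ₁ ξ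
  have hΛ₁ : Λ₁.PosDef := Matrix.PosDef.posSemidef_add (aux_vecMulVec_posSemidef φ) hΛ₀
  have hdet : IsUnit Λ₁.det := hΛ₁.det_pos.ne'.isUnit
  set x : Fin D → ℝ := Λ₁⁻¹ *ᵥ ξ with hx
  have hΛx : Λ₁ *ᵥ x = ξ := by
    rw [hx, mulVec_mulVec, Matrix.mul_nonsing_inv _ hdet, one_mulVec]
  have hμ₁ : μ₁ = x := by
    show Λ₁⁻¹ *ᵥ (yhat • φ + Λ₀ *ᵥ μ₀) = Λ₁⁻¹ *ᵥ ξ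
    rw [add_comm]
  have hT : Λ₀ᵀ = Λ₀ := by
    have := hΛ₀.isHermitian
    simpa [Matrix.IsHermitian, Matrix.conjTranspose_eq_transpose_of_trivial] using this
  have hsym : x ⬝ᵥ (Λ₀ *ᵥ μ₀) = μ₀ ⬝ᵥ (Λ₀ *ᵥ x) := by
    rw [dotProduct_mulVec, ← mulVec_transpose, hT, dotProduct_comm]
  have hquad : x ⬝ᵥ ξ = (φ ⬝ᵥ x) * (φ ⬝ᵥ x) + x ⬝ᵥ (Λ₀ *ᵥ x) := by
    rw [← hΛx]
    show x ⬝ᵥ (vecMulVec φ φ + Λ₀) *ᵥ x = _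
    rw [add_mulVec, dotProduct_add, aux_vecMulVec_mulVec, dotProduct_smul, smul_eq_mul,
      dotProduct_comm x φ]
  have hxi : x ⬝ᵥ ξ = x ⬝ᵥ (Λ₀ *ᵥ μ₀) + yhat * (φ ⬝ᵥ x) := by
    show x ⬝ᵥ (Λ₀ *ᵥ μ₀ + yhat • φ) = _
    rw [dotProduct_add, dotProduct_smul, smul_eq_mul, dotProduct_comm x φ]
  have key : yhat ^ 2 + μ₀ ⬝ᵥ (Λ₀ *ᵥ μ₀) - ξ ⬝ᵥ x
      = (yhat - φ ⬝ᵥ x) ^ 2 + (μ₀ - x) ⬝ᵥ (Λ₀ *ᵥ (μ₀ - x)) := by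
    have e : (μ₀ - x) ⬝ᵥ (Λ₀ *ᵥ (μ₀ - x))
        = μ₀ ⬝ᵥ (Λ₀ *ᵥ μ₀) - μ₀ ⬝ᵥ (Λ₀ *ᵥ x) - x ⬝ᵥ (Λ₀ *ᵥ μ₀) + x ⬝ᵥ (Λ₀ *ᵥ x) := by
      rw [mulVec_sub, sub_dotProduct, dotProduct_sub, dotProduct_sub]
      ring
    rw [e, dotProduct_comm ξ x]
    nlinarith [hquad, hxi, hsym]
  have h1 : 0 ≤ yhat ^ 2 + μ₀ ⬝ᵥ (Λ₀ *ᵥ μ₀) - ξ ⬝ᵥ x := by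
    rw [key]
    have := hΛ₀.posSemidef.dotProduct_mulVec_nonneg (μ₀ - x)
    simp only [star_trivial] at this
    positivity
  refine ⟨h1, ?_⟩
  have hμq : μ₁ ⬝ᵥ (Λ₁ *ᵥ μ₁) = ξ ⬝ᵥ x := by
    rw [hμ₁, hΛx, dotProduct_comm]
  rw [hμq]
  linarith
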